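/- Let 0 < D₂ < D₁ < 1 and let ρ ∈ (−1, 1) satisfy ρ < (2·D₂ − D₁·D₂ − D₁) / (D₁·(1 − D₂)). Define s_u = D₁·D₂·(1 − ρ) / (2·D₂ − D₁·(D₂·(1 − ρ) + ρ + 1)) and s₁ = D₁·s_u / ((1 − D₁)·s_u − D₁). Then s_u > 0, s₁ > 0, and (ρ + 1)·s₁·s_u / ((ρ + 1)·s₁·(s_u + 1) + 2·s_u) = D₂. -/

import Mathlib

/-- Three-node Gaussian example: with common-message noise variance
s_u = D₁·D₂·(1 − ρ)/(2·D₂ − D₁·(D₂·(1 − ρ) + ρ + 1)) and matching s₁, the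
two-description distortion equals D₂. -/
theorem stmt_13 (D₁ D₂ ρ : ℝ) (h0 : 0 < D₂) (h1 : D₂ < D₁) (h2 : D₁ < 1)
    (hρ : ρ ∈ Set.Ioo (-1 : ℝ) 1)
    (hρ2 : ρ < (2 * D₂ - D₁ * D₂ - D₁) / (D₁ * (1 - D₂))) :
    0 < D₁ * D₂ * (1 - ρ) / (2 * D₂ - D₁ * (D₂ * (1 - ρ) + ρ + 1)) ∧
    0 < D₁ * (D₁ * D₂ * (1 - ρ) / (2 * D₂ - D₁ * (D₂ * (1 - ρ) + ρ + 1))) /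
        ((1 - D₁) * (D₁ * D₂ * (1 - ρ) / (2 * D₂ - D₁ * (D₂ * (1 - ρ) + ρ + 1))) - D₁) ∧
    (ρ + 1) *
        (D₁ * (D₁ * D₂ * (1 - ρ) / (2 * D₂ - D₁ * (D₂ * (1 - ρ) + ρ + 1))) /
          ((1 - D₁) * (D₁ * D₂ * (1 - ρ) / (2 * D₂ - D₁ * (D₂ * (1 - ρ) + ρ + 1))) - D₁)) *
        (D₁ * D₂ * (1 - ρ) / (2 * D₂ - D₁ * (D₂ * (1 - ρ) + ρ + 1))) /
      ((ρ + 1) *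
          (D₁ * (D₁ * D₂ * (1 - ρ) / (2 * D₂ - D₁ * (D₂ * (1 - ρ) + ρ + 1))) /
            ((1 - D₁) * (D₁ * D₂ * (1 - ρ) / (2 * D₂ - D₁ * (D₂ * (1 - ρ) + ρ + 1))) - D₁)) *
          (D₁ * D₂ * (1 - ρ) / (2 * D₂ - D₁ * (D₂ * (1 - ρ) + ρ + 1)) + 1)
        + 2 * (D₁ * D₂ * (1 - ρ) / (2 * D₂ - D₁ * (D₂ * (1 - ρ) + ρ + 1)))) = D₂ := by
  obtain ⟨hρa, hρb⟩ := hρ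
  have hD1 : 0 < D₁ := h0.trans h1
  have h3 : 0 < D₁ * (1 - D₂) := by nlinarith
  have hd : 0 < 2 * D₂ - D₁ * (D₂ * (1 - ρ) + ρ + 1) := by
    rw [lt_div_iff₀ h3] at hρ2
    nlinarith
  have hd' : (2 * D₂ - D₁ * (D₂ * (1 - ρ) + ρ + 1)) ≠ 0 := ne_of_gt hd
  have hA : 0 < D₁ * D₂ * (1 - ρ) := by nlinarith
  have hsu : 0 < D₁ * D₂ * (1 - ρ) / (2 * D₂ - D₁ * (D₂ * (1 - ρ) + ρ + 1)) :=
    div_pos hA hd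
  have he : 0 < (1 + ρ) * (D₁ - D₂) := by
    apply mul_pos <;> linarith
  have he' : (1 + ρ) * (D₁ - D₂) ≠ 0 := ne_of_gt he
  have hden2 : (1 - D₁) * (D₁ * D₂ * (1 - ρ) / (2 * D₂ - D₁ * (D₂ * (1 - ρ) + ρ + 1))) - D₁
      = D₁ * ((1 + ρ) * (D₁ - D₂)) / (2 * D₂ - D₁ * (D₂ * (1 - ρ) + ρ + 1)) := by
    generalize hdd : 2 * D₂ - D₁ * (D₂ * (1 - ρ) + ρ + 1) = d at hd' ⊢
    field_simp
    rw [← hdd]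
    ring
  have hden2pos : 0 < (1 - D₁) * (D₁ * D₂ * (1 - ρ) / (2 * D₂ - D₁ * (D₂ * (1 - ρ) + ρ + 1))) - D₁ := by
    rw [hden2]
    exact div_pos (mul_pos hD1 he) hd
  have hs1 : 0 < D₁ * (D₁ * D₂ * (1 - ρ) / (2 * D₂ - D₁ * (D₂ * (1 - ρ) + ρ + 1))) /
      ((1 - D₁) * (D₁ * D₂ * (1 - ρ) / (2 * D₂ - D₁ * (D₂ * (1 - ρ) + ρ + 1))) - D₁) :=
    div_pos (mul_pos hD1 hsu) hden2pos
  refine ⟨hsu, hs1, ?_⟩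
  have hs1eq : D₁ * (D₁ * D₂ * (1 - ρ) / (2 * D₂ - D₁ * (D₂ * (1 - ρ) + ρ + 1))) /
      ((1 - D₁) * (D₁ * D₂ * (1 - ρ) / (2 * D₂ - D₁ * (D₂ * (1 - ρ) + ρ + 1))) - D₁)
      = D₁ * D₂ * (1 - ρ) / ((1 + ρ) * (D₁ - D₂)) := by
    rw [hden2]
    rw [div_eq_div_iff (by positivity) he']
    field_simp
  rw [hs1eq]
  have hdenom : 0 < (ρ + 1) * (D₁ * D₂ * (1 - ρ) / ((1 + ρ) * (D₁ - D₂))) *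
      (D₁ * D₂ * (1 - ρ) / (2 * D₂ - D₁ * (D₂ * (1 - ρ) + ρ + 1)) + 1)
      + 2 * (D₁ * D₂ * (1 - ρ) / (2 * D₂ - D₁ * (D₂ * (1 - ρ) + ρ + 1))) := by
    have h4 : 0 < ρ + 1 := by linarith
    have h5 : 0 < D₁ * D₂ * (1 - ρ) / ((1 + ρ) * (D₁ - D₂)) := div_pos hA he
    positivity
  rw [div_eq_iff (ne_of_gt hdenom)]
  generalize hdd : 2 * D₂ - D₁ * (D₂ * (1 - ρ) + ρ + 1) = d at hd' ⊢
  generalize hee : (1 + ρ) * (D₁ - D₂) = e at he' ⊢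
  field_simp
  rw [← hdd, ← hee]
  ring
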